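/- Let X be the spectrum of a positive element a in a C*-algebra with tracial state τ, and let μ_a be the Borel measure on X∖{0} representing the state f ↦ τ(f(a)) via the Riesz representation theorem. Then for every nonnegative f ∈ C₀(X∖{0}), the limit over n of τ(f(a)^{1/n}) equals μ_a(supp f), i.e. the dimension function d_τ([f(a)]) equals the measure of the open support of f. -/

import Mathlib

open MeasureTheory in
/-- If `μ` is the Radon measure on the (punctured) spectrum of a positive element `a`
representing `f ↦ τ(f(a))`, then for every nonnegative `f ∈ C₀(X ∖ {0})` the dimension
function `d_τ([f(a)]) = lim_n τ(f(a)^{1/n})` equals `μ(supp f)`. -/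
theorem dimension_function_eq_measure_support (A : Type*) [CStarAlgebra A]
    [PartialOrder A] [StarOrderedRing A]
    (τ : A →L[ℂ] ℂ) (hτ1 : τ 1 = 1) (htrace : ∀ a b : A, τ (a * b) = τ (b * a))
    (hpos : ∀ a : A, 0 ≤ (τ (star a * a)).re ∧ (τ (star a * a)).im = 0)
    (a : A) (ha : 0 ≤ a)
    (μ : Measure ℝ) [IsFiniteMeasure μ]
    (hsupp : μ ((spectrum ℝ a \ {0})ᶜ) = 0)
    (hrep : ∀ f : ℝ → ℝ, Continuous f → f 0 = 0 →
      τ (cfc f a) = ((∫ t, f t ∂μ : ℝ) : ℂ))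
    (f : ℝ → ℝ) (hf : Continuous f) (hf0 : f 0 = 0) (hfpos : ∀ t, 0 ≤ f t) :
    Filter.Tendsto (fun n : ℕ => τ (cfc (fun t : ℝ => f t ^ ((n : ℝ)⁻¹)) a))
      Filter.atTop (nhds (((μ {t | f t ≠ 0}).toReal : ℝ) : ℂ)) := by
  -- bound f on the spectrum
  have hcpt : IsCompact (spectrum ℝ a) := spectrum.isCompact a
  obtain ⟨C, hC⟩ := (hcpt.image hf).bddAbove
  set M : ℝ := max C 1 with hM
  have hM1 : (1 : ℝ) ≤ M := le_max_right _ _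
  -- continuity of the powers
  have hgc : ∀ n : ℕ, Continuous (fun t : ℝ => f t ^ ((n : ℝ)⁻¹)) := by
    intro n
    exact hf.rpow_const (fun t => Or.inr (by positivity))
  -- limit function
  set g : ℝ → ℝ := Set.indicator {t | f t ≠ 0} (fun _ => 1) with hg
  have hmeas : MeasurableSet {t : ℝ | f t ≠ 0} :=
    (isOpen_compl_iff.mpr (isClosed_eq hf continuous_const)).measurableSet
  -- pointwise convergence
  have hptwise : ∀ t : ℝ, Filter.Tendsto (fun n : ℕ => f t ^ ((n : ℝ)⁻¹))
      Filter.atTop (nhds (g t)) := by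
    intro t
    rcases eq_or_lt_of_le (hfpos t) with h0 | hpos'
    · have : g t = 0 := by
        simp [hg, Set.indicator_apply, ← h0]
      rw [this]
      apply Filter.Tendsto.congr' _ tendsto_const_nhds
      filter_upwards [Filter.eventually_ge_atTop 1] with n hn
      rw [← h0, Real.zero_rpow (by positivity)]
    · have : g t = 1 := by
        simp [hg, Set.indicator_apply, Set.mem_setOf_eq, ne_of_gt hpos']
      rw [this]
      have h1 : Filter.Tendsto (fun n : ℕ => (n : ℝ)⁻¹) Filter.atTop (nhds 0) :=
        tendsto_inv_atTop_zero.comp tendsto_natCast_atTop_atTop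
      have h2 := (Real.continuousAt_const_rpow (a := f t) (ne_of_gt hpos')).tendsto.comp h1
      simpa [Function.comp_def, Real.rpow_zero] using h2
  -- a.e. membership in the spectrum
  have hae : ∀ᵐ t ∂μ, t ∈ spectrum ℝ a \ {0} := by
    exact MeasureTheory.mem_ae_iff.mpr hsupp
  -- dominated convergence
  have hlim : Filter.Tendsto (fun n : ℕ => ∫ t, f t ^ ((n : ℝ)⁻¹) ∂μ)
      Filter.atTop (nhds (∫ t, g t ∂μ)) := by
    apply MeasureTheory.tendsto_integral_filter_of_dominated_convergence
      (bound := fun _ => M)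
    · exact Filter.Eventually.of_forall fun n => (hgc n).aestronglyMeasurable
    · filter_upwards [Filter.eventually_ge_atTop 1] with n hn
      filter_upwards [hae] with t ht
      have hft : f t ≤ M := le_trans (hC ⟨t, ht.1, rfl⟩) (le_max_left _ _)
      have h0 : (0:ℝ) ≤ (n : ℝ)⁻¹ := by positivity
      have h1 : ((n : ℝ))⁻¹ ≤ 1 := by
        rw [inv_le_one_iff₀]; right; exact_mod_cast hn
      have : f t ^ ((n : ℝ)⁻¹) ≤ M ^ ((n : ℝ)⁻¹) :=
        Real.rpow_le_rpow (hfpos t) hft h0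
      have h2 : M ^ ((n : ℝ)⁻¹) ≤ M := by
        calc M ^ ((n : ℝ)⁻¹) ≤ M ^ (1:ℝ) :=
              Real.rpow_le_rpow_of_exponent_le hM1 h1
          _ = M := Real.rpow_one M
      rw [Real.norm_eq_abs, abs_of_nonneg (Real.rpow_nonneg (hfpos t) _)]
      exact this.trans h2
    · exact integrable_const M
    · exact Filter.Eventually.of_forall hptwise
  have hgint : ∫ t, g t ∂μ = (μ {t | f t ≠ 0}).toReal := by
    rw [hg]
    simp [MeasureTheory.integral_indicator_const (1:ℝ) hmeas, Measure.real_def]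
  rw [hgint] at hlim
  have hlimC := (Complex.continuous_ofReal.tendsto _).comp hlim
  apply Filter.Tendsto.congr' _ hlimC
  filter_upwards [Filter.eventually_ge_atTop 1] with n hn
  have h0 : (fun t : ℝ => f t ^ ((n : ℝ)⁻¹)) 0 = 0 := by
    simp only [hf0]
    exact Real.zero_rpow (by positivity)
  exact (hrep _ (hgc n) h0).symm
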